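/- Let t: G∘G ⟹ G∘G satisfy the QYBE and define t⁽ⁿ⁾ inductively by t⁽¹⁾ = t, t⁽ⁿ⁺¹⁾ = (t⁽ⁿ⁾)_G ∘ Gⁿ(t). Then G((t⁽ⁿ⁻¹⁾)_G) ∘ t⁽ⁿ⁺¹⁾ = t⁽ⁿ⁺¹⁾ ∘ (t⁽ⁿ⁻¹⁾)_{G²} for all n ≥ 2. -/

import Mathlib

open CategoryTheory

variable {A : Type*} [Category A]

/-- `gpow G n M` is the `n`-th power `Gⁿ M` of the endofunctor `G` applied to `M`. -/
def gpow (Gf : A ⥤ A) : ℕ → A → A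
  | 0, M => M
  | n+1, M => gpow Gf n (Gf.obj M)

/-- `gmap G n f = Gⁿ(f)`. -/
def gmap (Gf : A ⥤ A) : (n : ℕ) → {X Y : A} → (X ⟶ Y) → (gpow Gf n X ⟶ gpow Gf n Y)
  | 0, _, _, f => f
  | n+1, _, _, f => gmap Gf n (Gf.map f)

lemma gpow_succ_out (Gf : A ⥤ A) : ∀ (n : ℕ) (M : A), gpow Gf (n+1) M = Gf.obj (gpow Gf n M)
  | 0, _ => rfl
  | n+1, M => gpow_succ_out Gf n (Gf.obj M)

lemma gpow_add (Gf : A ⥤ A) : ∀ (a b : ℕ) (M : A), gpow Gf a (gpow Gf b M) = gpow Gf (a + b) M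
  | a, 0, M => rfl
  | a, b+1, M => by
      rw [Nat.add_succ]
      exact gpow_add Gf a b (Gf.obj M)

lemma gpow_add' (Gf : A ⥤ A) (a b c : ℕ) (h : a + b = c) (M : A) :
    gpow Gf a (gpow Gf b M) = gpow Gf c M := by subst h; exact gpow_add Gf a b M

/-- `tpow G t n` is the component family of `t⁽ⁿ⁺¹⁾`, where `t⁽¹⁾ = t` and
`t⁽ⁿ⁺¹⁾ = (t⁽ⁿ⁾)_G ∘ Gⁿ(t)`. -/
def tpow (Gf : A ⥤ A) (t : Gf ⋙ Gf ⟶ Gf ⋙ Gf) :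
    (n : ℕ) → (M : A) → (gpow Gf (n+2) M ⟶ gpow Gf (n+2) M)
  | 0, M => t.app M
  | n+1, M => gmap Gf (n+1) (t.app M) ≫ tpow Gf t n (Gf.obj M)


section Aux
variable (Gf : A ⥤ A) (t : Gf ⋙ Gf ⟶ Gf ⋙ Gf)

lemma gmap_comp : ∀ (n : ℕ) {X Y Z : A} (f : X ⟶ Y) (g : Y ⟶ Z),
    gmap Gf n (f ≫ g) = gmap Gf n f ≫ gmap Gf n g
  | 0, _, _, _, _, _ => rfl
  | n+1, _, _, _, f, g => by
      show gmap Gf n (Gf.map (f ≫ g)) = gmap Gf n (Gf.map f) ≫ gmap Gf n (Gf.map g)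
      rw [Gf.map_comp]
      exact gmap_comp n _ _

lemma deep_comm (k : ℕ) {X Y : A} (g : X ⟶ Y) :
    gmap Gf (k+2) g ≫ gmap Gf k (t.app Y) = gmap Gf k (t.app X) ≫ gmap Gf (k+2) g := by
  have h2 := congrArg (gmap Gf k) (t.naturality g)
  rw [gmap_comp, gmap_comp] at h2
  exact h2

lemma tpow_natural : ∀ (n : ℕ) {Y Z : A} (h : Y ⟶ Z),
    gmap Gf (n+2) h ≫ tpow Gf t n Z = tpow Gf t n Y ≫ gmap Gf (n+2) h
  | 0, Y, Z, h => t.naturality h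
  | n+1, Y, Z, h => by
      show gmap Gf (n+3) h ≫ gmap Gf (n+1) (t.app Z) ≫ tpow Gf t n (Gf.obj Z)
        = (gmap Gf (n+1) (t.app Y) ≫ tpow Gf t n (Gf.obj Y)) ≫ gmap Gf (n+3) h
      erw [← Category.assoc]
      have h1 : gmap Gf (n+3) h ≫ gmap Gf (n+1) (t.app Z)
          = gmap Gf (n+1) (t.app Y) ≫ gmap Gf (n+3) h := deep_comm Gf t (n+1) h
      erw [h1, Category.assoc, Category.assoc]
      congr 1
      exact tpow_natural n (Gf.map h)
end Aux


section Aux2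
variable (Gf : A ⥤ A) (t : Gf ⋙ Gf ⟶ Gf ⋙ Gf)

lemma gbraid (hqybe : ∀ M : A, Gf.map (t.app M) ≫ t.app (Gf.obj M) ≫ Gf.map (t.app M) =
      t.app (Gf.obj M) ≫ Gf.map (t.app M) ≫ t.app (Gf.obj M)) (k : ℕ) (X : A) :
    gmap Gf (k+1) (t.app X) ≫ gmap Gf k (t.app (Gf.obj X)) ≫ gmap Gf (k+1) (t.app X)
      = gmap Gf k (t.app (Gf.obj X)) ≫ gmap Gf (k+1) (t.app X) ≫ gmap Gf k (t.app (Gf.obj X)) := by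
  have h := congrArg (gmap Gf k) (hqybe X)
  rw [gmap_comp, gmap_comp, gmap_comp, gmap_comp] at h
  exact h

lemma conj_top (hqybe : ∀ M : A, Gf.map (t.app M) ≫ t.app (Gf.obj M) ≫ Gf.map (t.app M) =
      t.app (Gf.obj M) ≫ Gf.map (t.app M) ≫ t.app (Gf.obj M)) :
    ∀ (k : ℕ) (X : A),
    tpow Gf t (k+1) X ≫ gmap Gf (k+1) (t.app X)
      = gmap Gf k (t.app (Gf.obj X)) ≫ tpow Gf t (k+1) X
  | 0, X => by
      show (Gf.map (t.app X) ≫ t.app (Gf.obj X)) ≫ Gf.map (t.app X)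
        = t.app (Gf.obj X) ≫ Gf.map (t.app X) ≫ t.app (Gf.obj X)
      rw [Category.assoc]
      exact hqybe X
  | k+1, X => by
      show (gmap Gf (k+2) (t.app X) ≫ gmap Gf (k+1) (t.app (Gf.obj X)) ≫ tpow Gf t k (Gf.obj (Gf.obj X))) ≫ gmap Gf (k+2) (t.app X)
        = gmap Gf (k+1) (t.app (Gf.obj X)) ≫ gmap Gf (k+2) (t.app X) ≫ gmap Gf (k+1) (t.app (Gf.obj X)) ≫ tpow Gf t k (Gf.obj (Gf.obj X))
      have hnat : tpow Gf t k (Gf.obj (Gf.obj X)) ≫ gmap Gf (k+2) (t.app X)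
          = gmap Gf (k+2) (t.app X) ≫ tpow Gf t k (Gf.obj (Gf.obj X)) :=
        (tpow_natural Gf t k (t.app X)).symm
      erw [Category.assoc, Category.assoc]
      have hb := gbraid Gf t hqybe (k+1) X
      exact (show gmap Gf (k+2) (t.app X) ≫ gmap Gf (k+1) (t.app (Gf.obj X)) ≫ tpow Gf t k (Gf.obj (Gf.obj X)) ≫ gmap Gf (k+2) (t.app X) = gmap Gf (k+2) (t.app X) ≫ gmap Gf (k+1) (t.app (Gf.obj X)) ≫ gmap Gf (k+2) (t.app X) ≫ tpow Gf t k (Gf.obj (Gf.obj X)) from congrArg (fun (z : gpow Gf (k+4) X ⟶ gpow Gf (k+4) X) => gmap Gf (k+2) (t.app X) ≫ gmap Gf (k+1) (t.app (Gf.obj X)) ≫ z) hnat).trans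
        ((show gmap Gf (k+2) (t.app X) ≫ gmap Gf (k+1) (t.app (Gf.obj X)) ≫ gmap Gf (k+2) (t.app X) ≫ tpow Gf t k (Gf.obj (Gf.obj X)) = (gmap Gf (k+2) (t.app X) ≫ gmap Gf (k+1) (t.app (Gf.obj X)) ≫ gmap Gf (k+2) (t.app X)) ≫ tpow Gf t k (Gf.obj (Gf.obj X)) from (congrArg (fun (z : gpow Gf (k+4) X ⟶ gpow Gf (k+4) X) => gmap Gf (k+2) (t.app X) ≫ z) (Category.assoc _ _ _).symm).trans (Category.assoc _ _ _).symm).trans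
        ((show (gmap Gf (k+2) (t.app X) ≫ gmap Gf (k+1) (t.app (Gf.obj X)) ≫ gmap Gf (k+2) (t.app X)) ≫ tpow Gf t k (Gf.obj (Gf.obj X)) = (gmap Gf (k+1) (t.app (Gf.obj X)) ≫ gmap Gf (k+2) (t.app X) ≫ gmap Gf (k+1) (t.app (Gf.obj X))) ≫ tpow Gf t k (Gf.obj (Gf.obj X)) from congrArg (fun (z : gpow Gf (k+4) X ⟶ gpow Gf (k+4) X) => z ≫ tpow Gf t k (Gf.obj (Gf.obj X))) hb).trans
        ((show (gmap Gf (k+1) (t.app (Gf.obj X)) ≫ gmap Gf (k+2) (t.app X) ≫ gmap Gf (k+1) (t.app (Gf.obj X))) ≫ tpow Gf t k (Gf.obj (Gf.obj X)) = gmap Gf (k+1) (t.app (Gf.obj X)) ≫ gmap Gf (k+2) (t.app X) ≫ gmap Gf (k+1) (t.app (Gf.obj X)) ≫ tpow Gf t k (Gf.obj (Gf.obj X)) from (Category.assoc _ _ _).trans (congrArg (fun (z : gpow Gf (k+4) X ⟶ gpow Gf (k+4) X) => gmap Gf (k+1) (t.app (Gf.obj X)) ≫ z) (Category.assoc _ _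 _))))))
end Aux2

section Aux3
variable (Gf : A ⥤ A) (t : Gf ⋙ Gf ⟶ Gf ⋙ Gf)

def outG {n : ℕ} {X Y : A} (f : gpow Gf n X ⟶ gpow Gf n Y) :
    gpow Gf (n+1) X ⟶ gpow Gf (n+1) Y :=
  eqToHom (gpow_succ_out Gf n X) ≫ Gf.map f ≫ eqToHom (gpow_succ_out Gf n Y).symm

lemma outG_comp {n : ℕ} {X Y Z : A} (f : gpow Gf n X ⟶ gpow Gf n Y)
    (g : gpow Gf n Y ⟶ gpow Gf n Z) :
    outG Gf (f ≫ g) = outG Gf f ≫ outG Gf g := by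
  simp [outG]

lemma outG_gmap : ∀ (n : ℕ) {X Y : A} (f : X ⟶ Y),
    outG Gf (gmap Gf n f) = gmap Gf (n+1) f
  | 0, X, Y, f => by
      have h1 : eqToHom (gpow_succ_out Gf 0 X) = 𝟙 (gpow Gf 1 X) := rfl
      have h2 : eqToHom (gpow_succ_out Gf 0 Y).symm = 𝟙 (gpow Gf 1 Y) := rfl
      show eqToHom (gpow_succ_out Gf 0 X) ≫ Gf.map f ≫ eqToHom (gpow_succ_out Gf 0 Y).symm
        = Gf.map f
      erw [h1, h2, Category.id_comp]
      exact Category.comp_id (Gf.map f)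
  | n+1, X, Y, f => outG_gmap n (Gf.map f)

end Aux3


section Aux4
variable (Gf : A ⥤ A) (t : Gf ⋙ Gf ⟶ Gf ⋙ Gf)

/-- The word `G((t⁽ⁿ⁺¹⁾)_G)` written without any outer `Gf.map`. -/
def stpow : (n : ℕ) → (X : A) → (gpow Gf (n+3) X ⟶ gpow Gf (n+3) X)
  | 0, X => gmap Gf 1 (t.app X)
  | n+1, X => gmap Gf (n+2) (t.app X) ≫ stpow n (Gf.obj X)

lemma outG_tpow : ∀ (n : ℕ) (X : A), outG Gf (tpow Gf t n X) = stpow Gf t n X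
  | 0, X => outG_gmap Gf 0 (t.app X)
  | n+1, X =>
      (outG_comp Gf (gmap Gf (n+1) (t.app X)) (tpow Gf t n (Gf.obj X))).trans <|
        (congrArg (fun z => z ≫ outG Gf (tpow Gf t n (Gf.obj X)))
            (outG_gmap Gf (n+1) (t.app X))).trans <|
          congrArg (fun z => gmap Gf (n+2) (t.app X) ≫ z) (outG_tpow n (Gf.obj X))

lemma tpow_braid_aux (hqybe : ∀ M : A, Gf.map (t.app M) ≫ t.app (Gf.obj M) ≫ Gf.map (t.app M) =
      t.app (Gf.obj M) ≫ Gf.map (t.app M) ≫ t.app (Gf.obj M)) :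
    ∀ (n : ℕ) (M : A),
    tpow Gf t (n+2) M ≫ stpow Gf t n (Gf.obj M)
      = tpow Gf t n (Gf.obj (Gf.obj M)) ≫ tpow Gf t (n+2) M
  | 0, M => by
      show (Gf.map (Gf.map (t.app M)) ≫ Gf.map (t.app (Gf.obj M)) ≫ t.app (Gf.obj (Gf.obj M)))
          ≫ Gf.map (t.app (Gf.obj M))
        = t.app (Gf.obj (Gf.obj M)) ≫ Gf.map (Gf.map (t.app M)) ≫ Gf.map (t.app (Gf.obj M))
          ≫ t.app (Gf.obj (Gf.obj M))
      have nat2 : Gf.map (Gf.map (t.app M)) ≫ t.app (Gf.obj (Gf.obj M))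
          = t.app (Gf.obj (Gf.obj M)) ≫ Gf.map (Gf.map (t.app M)) := t.naturality (t.app M)
      simp only [Category.assoc]
      slice_lhs 2 4 => rw [hqybe (Gf.obj M)]
      slice_lhs 1 2 => rw [nat2]
      simp only [Category.assoc]
  | n+1, M => by
      show (gmap Gf (n+3) (t.app M) ≫ tpow Gf t (n+2) (Gf.obj M))
          ≫ gmap Gf (n+2) (t.app (Gf.obj M)) ≫ stpow Gf t n (Gf.obj (Gf.obj M))
        = (gmap Gf (n+1) (t.app (Gf.obj (Gf.obj M)))
            ≫ tpow Gf t n (Gf.obj (Gf.obj (Gf.obj M))))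
          ≫ gmap Gf (n+3) (t.app M) ≫ tpow Gf t (n+2) (Gf.obj M)
      have c : tpow Gf t (n+2) (Gf.obj M) ≫ gmap Gf (n+2) (t.app (Gf.obj M))
          = gmap Gf (n+1) (t.app (Gf.obj (Gf.obj M))) ≫ tpow Gf t (n+2) (Gf.obj M) :=
        conj_top Gf t hqybe (n+1) (Gf.obj M)
      have d : gmap Gf (n+3) (t.app M) ≫ gmap Gf (n+1) (t.app (Gf.obj (Gf.obj M)))
          = gmap Gf (n+1) (t.app (Gf.obj (Gf.obj M))) ≫ gmap Gf (n+3) (t.app M) :=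
        deep_comm Gf t (n+1) (t.app M)
      have hh : gmap Gf (n+3) (t.app M) ≫ tpow Gf t n (Gf.obj (Gf.obj (Gf.obj M)))
          = tpow Gf t n (Gf.obj (Gf.obj (Gf.obj M))) ≫ gmap Gf (n+3) (t.app M) :=
        tpow_natural Gf t n (Gf.map (t.app M))
      have ih : tpow Gf t (n+2) (Gf.obj M) ≫ stpow Gf t n (Gf.obj (Gf.obj M))
          = tpow Gf t n (Gf.obj (Gf.obj (Gf.obj M))) ≫ tpow Gf t (n+2) (Gf.obj M) :=
        tpow_braid_aux hqybe n (Gf.obj M)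
      exact (show (gmap Gf (n+3) (t.app M) ≫ tpow Gf t (n+2) (Gf.obj M)) ≫ gmap Gf (n+2) (t.app (Gf.obj M)) ≫ stpow Gf t n (Gf.obj (Gf.obj M)) = gmap Gf (n+3) (t.app M) ≫ (tpow Gf t (n+2) (Gf.obj M) ≫ gmap Gf (n+2) (t.app (Gf.obj M))) ≫ stpow Gf t n (Gf.obj (Gf.obj M)) from (Category.assoc _ _ _).trans (congrArg (fun (z : gpow Gf (n+5) M ⟶ gpow Gf (n+5) M) => gmap Gf (n+3) (t.app M) ≫ z) (Category.assoc _ _ _).symm)).trans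
        ((show gmap Gf (n+3) (t.app M) ≫ (tpow Gf t (n+2) (Gf.obj M) ≫ gmap Gf (n+2) (t.app (Gf.obj M))) ≫ stpow Gf t n (Gf.obj (Gf.obj M)) = gmap Gf (n+3) (t.app M) ≫ (gmap Gf (n+1) (t.app (Gf.obj (Gf.obj M))) ≫ tpow Gf t (n+2) (Gf.obj M)) ≫ stpow Gf t n (Gf.obj (Gf.obj M)) from congrArg (fun (z : gpow Gf (n+5) M ⟶ gpow Gf (n+5) M) => gmap Gf (n+3) (t.app M) ≫ z ≫ stpow Gf t n (Gf.obj (Gf.obj M))) c).trans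
        ((show gmap Gf (n+3) (t.app M) ≫ (gmap Gf (n+1) (t.app (Gf.obj (Gf.obj M))) ≫ tpow Gf t (n+2) (Gf.obj M)) ≫ stpow Gf t n (Gf.obj (Gf.obj M)) = gmap Gf (n+3) (t.app M) ≫ gmap Gf (n+1) (t.app (Gf.obj (Gf.obj M))) ≫ tpow Gf t (n+2) (Gf.obj M) ≫ stpow Gf t n (Gf.obj (Gf.obj M)) from congrArg (fun (z : gpow Gf (n+5) M ⟶ gpow Gf (n+5) M) => gmap Gf (n+3) (t.app M) ≫ z) (Category.assoc _ _ _)).trans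
        ((show gmap Gf (n+3) (t.app M) ≫ gmap Gf (n+1) (t.app (Gf.obj (Gf.obj M))) ≫ tpow Gf t (n+2) (Gf.obj M) ≫ stpow Gf t n (Gf.obj (Gf.obj M)) = gmap Gf (n+3) (t.app M) ≫ gmap Gf (n+1) (t.app (Gf.obj (Gf.obj M))) ≫ tpow Gf t n (Gf.obj (Gf.obj (Gf.obj M))) ≫ tpow Gf t (n+2) (Gf.obj M) from congrArg (fun (z : gpow Gf (n+5) M ⟶ gpow Gf (n+5) M) => gmap Gf (n+3) (t.app M) ≫ gmap Gf (n+1) (t.app (Gf.obj (Gf.obj M))) ≫ z) ih).trans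
        ((show gmap Gf (n+3) (t.app M) ≫ gmap Gf (n+1) (t.app (Gf.obj (Gf.obj M))) ≫ tpow Gf t n (Gf.obj (Gf.obj (Gf.obj M))) ≫ tpow Gf t (n+2) (Gf.obj M) = (gmap Gf (n+3) (t.app M) ≫ gmap Gf (n+1) (t.app (Gf.obj (Gf.obj M)))) ≫ tpow Gf t n (Gf.obj (Gf.obj (Gf.obj M))) ≫ tpow Gf t (n+2) (Gf.obj M) from (Category.assoc _ _ _).symm).trans
        ((show (gmap Gf (n+3) (t.app M) ≫ gmap Gf (n+1) (t.app (Gf.obj (Gf.obj M)))) ≫ tpow Gf t n (Gf.obj (Gf.obj (Gf.obj M))) ≫ tpow Gf t (n+2) (Gf.obj M) = (gmap Gf (n+1) (t.app (Gf.obj (Gf.obj M))) ≫ gmap Gf (n+3) (t.app M)) ≫ tpow Gf t n (Gf.obj (Gf.obj (Gf.obj M))) ≫ tpow Gf t (n+2) (Gf.obj M) from congrArg (fun (z : gpow Gf (n+5) M ⟶ gpow Gf (n+5) M) => z ≫ tpow Gf t n (Gf.obj (Gf.obj (Gf.obj M))) ≫ tpow Gf t (n+2) (Gf.obj M)) d)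.trans
        ((show (gmap Gf (n+1) (t.app (Gf.obj (Gf.obj M))) ≫ gmap Gf (n+3) (t.app M)) ≫ tpow Gf t n (Gf.obj (Gf.obj (Gf.obj M))) ≫ tpow Gf t (n+2) (Gf.obj M) = gmap Gf (n+1) (t.app (Gf.obj (Gf.obj M))) ≫ (gmap Gf (n+3) (t.app M) ≫ tpow Gf t n (Gf.obj (Gf.obj (Gf.obj M)))) ≫ tpow Gf t (n+2) (Gf.obj M) from (Category.assoc _ _ _).trans (congrArg (fun (z : gpow Gf (n+5) M ⟶ gpow Gf (n+5) M) => gmap Gf (n+1) (t.app (Gf.obj (Gf.obj M))) ≫ z) (Category.assoc _ _ _).symm)).trans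
        ((show gmap Gf (n+1) (t.app (Gf.obj (Gf.obj M))) ≫ (gmap Gf (n+3) (t.app M) ≫ tpow Gf t n (Gf.obj (Gf.obj (Gf.obj M)))) ≫ tpow Gf t (n+2) (Gf.obj M) = gmap Gf (n+1) (t.app (Gf.obj (Gf.obj M))) ≫ (tpow Gf t n (Gf.obj (Gf.obj (Gf.obj M))) ≫ gmap Gf (n+3) (t.app M)) ≫ tpow Gf t (n+2) (Gf.obj M) from congrArg (fun (z : gpow Gf (n+5) M ⟶ gpow Gf (n+5) M) => gmap Gf (n+1) (t.app (Gf.obj (Gf.obj M))) ≫ z ≫ tpow Gf t (n+2) (Gf.obj M)) hh).trans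
        ((show gmap Gf (n+1) (t.app (Gf.obj (Gf.obj M))) ≫ (tpow Gf t n (Gf.obj (Gf.obj (Gf.obj M))) ≫ gmap Gf (n+3) (t.app M)) ≫ tpow Gf t (n+2) (Gf.obj M) = (gmap Gf (n+1) (t.app (Gf.obj (Gf.obj M))) ≫ tpow Gf t n (Gf.obj (Gf.obj (Gf.obj M)))) ≫ gmap Gf (n+3) (t.app M) ≫ tpow Gf t (n+2) (Gf.obj M) from (congrArg (fun (z : gpow Gf (n+5) M ⟶ gpow Gf (n+5) M) => gmap Gf (n+1) (t.app (Gf.obj (Gf.obj M))) ≫ z) (Category.assoc _ _ _)).trans (Category.assoc _ _ _).symm)))))))))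

end Aux4


/-- if `t` satisfies the QYBE then
`G((t⁽ⁿ⁻¹⁾)_G) ∘ t⁽ⁿ⁺¹⁾ = t⁽ⁿ⁺¹⁾ ∘ (t⁽ⁿ⁻¹⁾)_{G²}` for all `n ≥ 2`
(stated with `n = m+2`, and `tpow Gf t k = t⁽ᵏ⁺¹⁾`). -/
theorem tpow_braid (Gf : A ⥤ A) (t : Gf ⋙ Gf ⟶ Gf ⋙ Gf)
    (hqybe : ∀ M : A, Gf.map (t.app M) ≫ t.app (Gf.obj M) ≫ Gf.map (t.app M) =
      t.app (Gf.obj M) ≫ Gf.map (t.app M) ≫ t.app (Gf.obj M))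
    (m : ℕ) (M : A) :
    tpow Gf t (m + 2) M ≫
        eqToHom (show gpow Gf (m+4) M = Gf.obj (gpow Gf (m+2) (Gf.obj M)) from
          gpow_succ_out Gf (m+2) (Gf.obj M)) ≫
        Gf.map (tpow Gf t m (Gf.obj M)) ≫
        eqToHom (show Gf.obj (gpow Gf (m+2) (Gf.obj M)) = gpow Gf (m+4) M from
          (gpow_succ_out Gf (m+2) (Gf.obj M)).symm) =
      tpow Gf t m (Gf.obj (Gf.obj M)) ≫ tpow Gf t (m + 2) M :=
  (congrArg (fun z => tpow Gf t (m+2) M ≫ z) (outG_tpow Gf t m (Gf.obj M))).trans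
    (tpow_braid_aux Gf t hqybe m M)
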